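/- Every finite metric space (X,d) with n points admits an ultrametric ρ on X satisfying d(x,y) ≤ ρ(x,y) ≤ n·d(x,y) for all x,y ∈ X (i.e., X is n-equivalent to an ultrametric). -/

import Mathlib

open Relation Finset

namespace UMaux

variable {X : Type} [MetricSpace X] [Fintype X]

def rel (t : ℝ) (a b : X) : Prop := dist a b ≤ t

def conn (t : ℝ) (a b : X) : Prop := Relation.ReflTransGen (rel t) a b

lemma conn_mono {s t : ℝ} (hst : s ≤ t) {a b : X} (h : conn s a b) : conn t a b :=
  Relation.ReflTransGen.mono (r := rel s) (p := rel t) (fun _ _ hd => le_trans hd hst) a b h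

lemma rel_symm (t : ℝ) : Symmetric (rel (X := X) t) := fun a b h => by
  simpa [rel, dist_comm] using h

lemma conn_symm {t : ℝ} {a b : X} (h : conn t a b) : conn t b a :=
  (@Relation.ReflTransGen.stdSymm _ _ ⟨fun a b h => rel_symm t h⟩).symm a b h

noncomputable def V (X : Type) [MetricSpace X] [Fintype X] : Finset ℝ :=
  insert 0 ((Finset.univ : Finset (X × X)).image fun p => dist p.1 p.2)

lemma zero_mem_V : (0 : ℝ) ∈ V X := mem_insert_self _ _

lemma dist_mem_V (a b : X) : dist a b ∈ V X :=
  mem_insert_of_mem (mem_image.2 ⟨(a, b), mem_univ _, rfl⟩)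

lemma V_nonneg {v : ℝ} (hv : v ∈ V X) : 0 ≤ v := by
  rcases mem_insert.1 hv with h | h
  · simp [h]
  · rcases mem_image.1 h with ⟨p, _, rfl⟩; exact dist_nonneg

open Classical in
noncomputable def T (x y : X) : Finset ℝ := (V X).filter fun v => conn v x y

lemma dist_mem_T (x y : X) : dist x y ∈ T x y := by
  classical
  exact mem_filter.2 ⟨dist_mem_V x y, Relation.ReflTransGen.single (le_refl (dist x y))⟩

noncomputable def rho0 (x y : X) : ℝ := (T x y).min' ⟨dist x y, dist_mem_T x y⟩

lemma rho0_mem (x y : X) : rho0 x y ∈ T x y := Finset.min'_mem _ _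

lemma rho0_mem_V (x y : X) : rho0 x y ∈ V X := by
  classical
  exact (mem_filter.1 (rho0_mem x y)).1

lemma conn_rho0 (x y : X) : conn (rho0 x y) x y := by
  classical
  exact (mem_filter.1 (rho0_mem x y)).2

lemma rho0_le {x y : X} {v : ℝ} (hv : v ∈ V X) (h : conn v x y) : rho0 x y ≤ v := by
  classical
  exact Finset.min'_le _ _ (mem_filter.2 ⟨hv, h⟩)

lemma rho0_nonneg (x y : X) : 0 ≤ rho0 x y := V_nonneg (rho0_mem_V x y)

lemma rho0_le_dist (x y : X) : rho0 x y ≤ dist x y :=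
  rho0_le (dist_mem_V x y) (Relation.ReflTransGen.single (le_refl (dist x y)))

lemma rho0_self (x : X) : rho0 x x = 0 :=
  le_antisymm (rho0_le zero_mem_V Relation.ReflTransGen.refl) (rho0_nonneg x x)

lemma rho0_comm (x y : X) : rho0 x y = rho0 y x :=
  le_antisymm (rho0_le (rho0_mem_V y x) (conn_symm (conn_rho0 y x)))
    (rho0_le (rho0_mem_V x y) (conn_symm (conn_rho0 x y)))

lemma rho0_strong (x y z : X) : rho0 x z ≤ max (rho0 x y) (rho0 y z) := by
  have hmem : max (rho0 x y) (rho0 y z) ∈ V X := by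
    rcases max_cases (rho0 x y) (rho0 y z) with ⟨h, _⟩ | ⟨h, _⟩ <;> rw [h]
    · exact rho0_mem_V x y
    · exact rho0_mem_V y z
  exact rho0_le hmem
    ((conn_mono (le_max_left _ _) (conn_rho0 x y)).trans
      (conn_mono (le_max_right _ _) (conn_rho0 y z)))

/-- `reachN t x k y`: `y` is reachable from `x` in exactly `k` steps of size `≤ t`. -/
def reachN (t : ℝ) (x : X) : ℕ → X → Prop
  | 0, y => x = y
  | k + 1, y => ∃ z, reachN t x k z ∧ dist z y ≤ t

lemma exists_reachN {t : ℝ} {x y : X} (h : conn t x y) : ∃ k, reachN t x k y := by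
  induction h with
  | refl => exact ⟨0, rfl⟩
  | tail _ hbc ih =>
      rcases ih with ⟨k, hk⟩
      exact ⟨k + 1, _, hk, hbc⟩

lemma dist_le_of_reachN {t : ℝ} (ht : 0 ≤ t) {x : X} :
    ∀ k, ∀ y : X, reachN t x k y → dist x y ≤ k * t := by
  intro k
  induction k with
  | zero => intro y h; rcases h with rfl; simp
  | succ k ih =>
      intro y h
      rcases h with ⟨z, hz, hd⟩
      have h1 := ih z hz
      have h2 := dist_triangle x z y
      push_cast
      nlinarith [dist_nonneg (x := x) (y := z)]

open Classical in
noncomputable def S (t : ℝ) (x : X) (k : ℕ) : Finset X :=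
  Finset.univ.filter fun z => ∃ j ≤ k, reachN t x j z

lemma mem_S {t : ℝ} {x : X} {k : ℕ} {z : X} :
    z ∈ S t x k ↔ ∃ j ≤ k, reachN t x j z := by
  classical
  simp [S]

lemma S_mono (t : ℝ) (x : X) {k m : ℕ} (h : k ≤ m) : S t x k ⊆ S t x m := by
  intro z hz
  rcases mem_S.1 hz with ⟨j, hj, hr⟩
  exact mem_S.2 ⟨j, le_trans hj h, hr⟩

lemma S_stab {t : ℝ} {x : X} {k : ℕ} (h : S t x (k + 1) ⊆ S t x k) :
    ∀ m, S t x (k + m) ⊆ S t x k := by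
  intro m
  induction m with
  | zero => exact Finset.Subset.refl _
  | succ m ih =>
      intro z hz
      rcases mem_S.1 hz with ⟨j, hj, hr⟩
      match j, hr with
      | 0, hr =>
          rcases hr with rfl
          exact mem_S.2 ⟨0, Nat.zero_le _, rfl⟩
      | (i + 1), hr =>
          rcases hr with ⟨w, hw, hd⟩
          have hwk : w ∈ S t x k := ih (mem_S.2 ⟨i, by omega, hw⟩)
          rcases mem_S.1 hwk with ⟨j', hj', hw'⟩
          exact h (mem_S.2 ⟨j' + 1, by omega, ⟨w, hw', hd⟩⟩)

lemma exists_stab (t : ℝ) (x : X) :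
    ∃ k < Fintype.card X, S t x (k + 1) ⊆ S t x k := by
  by_contra hc
  push_neg at hc
  have hgrow : ∀ k ≤ Fintype.card X, k + 1 ≤ (S t x k).card := by
    intro k
    induction k with
    | zero =>
        intro _
        exact Finset.card_pos.2 ⟨x, mem_S.2 ⟨0, le_rfl, rfl⟩⟩
    | succ k ih =>
        intro hk
        have hk' : k < Fintype.card X := by omega
        have h1 : S t x k ⊂ S t x (k + 1) :=
          Finset.ssubset_def.2 ⟨S_mono t x (Nat.le_succ k), hc k hk'⟩
        have := Finset.card_lt_card h1
        have := ih (by omega)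
        omega
  have h1 := hgrow (Fintype.card X) le_rfl
  have h2 : (S t x (Fintype.card X)).card ≤ Fintype.card X := by
    simpa using Finset.card_le_univ (S t x (Fintype.card X))
  omega

lemma dist_le_card_mul {t : ℝ} (ht : 0 ≤ t) {x y : X} (h : conn t x y) :
    dist x y ≤ (Fintype.card X : ℝ) * t := by
  rcases exists_reachN h with ⟨m, hm⟩
  rcases exists_stab t x with ⟨k, hk, hstab⟩
  have hy : y ∈ S t x (k + m) := mem_S.2 ⟨m, by omega, hm⟩
  have hy' : y ∈ S t x k := S_stab hstab m hy
  rcases mem_S.1 hy' with ⟨j, hj, hr⟩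
  have hd := dist_le_of_reachN ht j y hr
  have hjc : (j : ℝ) ≤ (Fintype.card X : ℝ) := by
    exact_mod_cast (by omega : j ≤ Fintype.card X)
  calc dist x y ≤ j * t := hd
    _ ≤ (Fintype.card X : ℝ) * t := mul_le_mul_of_nonneg_right hjc ht

end UMaux

/-- Every `n`-point metric space is `n`-equivalent to an ultrametric: there is an
ultrametric `ρ` on `X` with `d(x,y) ≤ ρ(x,y) ≤ n·d(x,y)`. -/
theorem metric_n_equivalent_to_ultrametric
    (X : Type) [MetricSpace X] [Fintype X] :
    ∃ ρ : X → X → ℝ,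
      (∀ x, ρ x x = 0) ∧
      (∀ x y, x ≠ y → 0 < ρ x y) ∧
      (∀ x y, ρ x y = ρ y x) ∧
      (∀ x y z, ρ x z ≤ max (ρ x y) (ρ y z)) ∧
      (∀ x y : X, dist x y ≤ ρ x y ∧ ρ x y ≤ (Fintype.card X : ℝ) * dist x y) := by
  open UMaux in
  refine ⟨fun x y => (Fintype.card X : ℝ) * UMaux.rho0 x y, ?_, ?_, ?_, ?_, ?_⟩
  · intro x; dsimp only; rw [UMaux.rho0_self]; ring
  · intro x y hxy
    dsimp only
    have h1 : (0 : ℝ) < dist x y := dist_pos.2 hxy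
    have h2 : dist x y ≤ (Fintype.card X : ℝ) * UMaux.rho0 x y :=
      UMaux.dist_le_card_mul (UMaux.rho0_nonneg x y) (UMaux.conn_rho0 x y)
    linarith
  · intro x y; dsimp only; rw [UMaux.rho0_comm]
  · intro x y z
    dsimp only
    have h := UMaux.rho0_strong x y z
    have hn : (0 : ℝ) ≤ (Fintype.card X : ℝ) := Nat.cast_nonneg _
    calc (Fintype.card X : ℝ) * UMaux.rho0 x z
        ≤ (Fintype.card X : ℝ) * max (UMaux.rho0 x y) (UMaux.rho0 y z) :=
          mul_le_mul_of_nonneg_left h hn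
      _ = max ((Fintype.card X : ℝ) * UMaux.rho0 x y)
            ((Fintype.card X : ℝ) * UMaux.rho0 y z) := by
          rcases max_cases (UMaux.rho0 x y) (UMaux.rho0 y z) with ⟨he, hle⟩ | ⟨he, hle⟩ <;>
            rw [he] <;>
            [exact (max_eq_left (mul_le_mul_of_nonneg_left hle hn)).symm;
             exact (max_eq_right (mul_le_mul_of_nonneg_left (le_of_lt hle) hn)).symm]
  · intro x y
    dsimp only
    constructor
    · exact UMaux.dist_le_card_mul (UMaux.rho0_nonneg x y) (UMaux.conn_rho0 x y)
    · exact mul_le_mul_of_nonneg_left (UMaux.rho0_le_dist x y) (Nat.cast_nonneg _)
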